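/- Let B ∈ ℝ^{p×m}, D ∈ ℝ^{q×m} with BD^T = 0, rank B = p, rank D = q, p + q = m, and let K index a set of columns. Then dim ker D_K (the number of independent K-loops) equals p − rank B_{K^c}. -/

import Mathlib

open Matrix

/-- Dual counting statement: dim ker D_K (the number of independent K-loops)
equals p − rank B_{Kᶜ}. -/
theorem dim_ker_DK {p q m : ℕ}
    (B : Matrix (Fin p) (Fin m) ℝ) (D : Matrix (Fin q) (Fin m) ℝ)
    (hBD : B * Dᵀ = 0) (hB : B.rank = p) (hD : D.rank = q) (hpq : p + q = m)
    (K : Finset (Fin m)) :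
    Module.finrank ℝ
        ↥(LinearMap.ker (D.submatrix id (fun j : {j : Fin m // j ∈ K} => (j : Fin m))).mulVecLin)
      = p - (B.submatrix id (fun j : {j : Fin m // j ∈ Kᶜ} => (j : Fin m))).rank := by
  classical
  have hDB : D * Bᵀ = 0 := by
    have := congrArg Matrix.transpose hBD
    simpa [Matrix.transpose_mul] using this
  set T : (Fin p → ℝ) →ₗ[ℝ] ({j : Fin m // j ∈ Kᶜ} → ℝ) :=
    ((Bᵀ).submatrix (fun j : {j : Fin m // j ∈ Kᶜ} => (j : Fin m)) id).mulVecLin with hT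
  set Φ : (Fin p → ℝ) →ₗ[ℝ] ({j : Fin m // j ∈ K} → ℝ) :=
    ((Bᵀ).submatrix (fun j : {j : Fin m // j ∈ K} => (j : Fin m)) id).mulVecLin with hΦ
  set DK := (D.submatrix id (fun j : {j : Fin m // j ∈ K} => (j : Fin m))).mulVecLin with hDK
  -- basic computations of the maps
  have hTval : ∀ (y : Fin p → ℝ) (j : {j : Fin m // j ∈ Kᶜ}), T y j = (Bᵀ *ᵥ y) (j : Fin m) := by
    intro y j
    simp [hT, Matrix.mulVecLin_apply, Matrix.mulVec, dotProduct, Matrix.submatrix]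
  have hΦval : ∀ (y : Fin p → ℝ) (j : {j : Fin m // j ∈ K}), Φ y j = (Bᵀ *ᵥ y) (j : Fin m) := by
    intro y j
    simp [hΦ, Matrix.mulVecLin_apply, Matrix.mulVec, dotProduct, Matrix.submatrix]
  have hDKval : ∀ (x : {j : Fin m // j ∈ K} → ℝ) (i : Fin q),
      DK x i = ∑ j : {j : Fin m // j ∈ K}, D i (j : Fin m) * x j := by
    intro x i
    simp [hDK, Matrix.mulVecLin_apply, Matrix.mulVec, dotProduct, Matrix.submatrix]
  -- Bᵀ is injective
  have hBT : (Bᵀ).rank = p := by rw [Matrix.rank_transpose]; exact hB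
  have hBTinj : Function.Injective (Bᵀ).mulVecLin := by
    have h := LinearMap.finrank_range_add_finrank_ker (Bᵀ).mulVecLin
    rw [Module.finrank_pi ℝ, Fintype.card_fin] at h
    have hrange : Module.finrank ℝ (LinearMap.range (Bᵀ).mulVecLin) = p := hBT
    have hker : Module.finrank ℝ (LinearMap.ker (Bᵀ).mulVecLin) = 0 := by omega
    rw [← LinearMap.ker_eq_bot]
    exact Submodule.finrank_eq_zero.mp hker
  -- ker D = range Bᵀ
  have hkerrange : LinearMap.ker D.mulVecLin = LinearMap.range (Bᵀ).mulVecLin := by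
    have hle : LinearMap.range (Bᵀ).mulVecLin ≤ LinearMap.ker D.mulVecLin := by
      rintro _ ⟨y, rfl⟩
      have : (D * Bᵀ).mulVecLin y = 0 := by rw [hDB]; simp
      rw [Matrix.mulVecLin_mul] at this
      simpa using this
    have h := LinearMap.finrank_range_add_finrank_ker D.mulVecLin
    rw [Module.finrank_pi ℝ, Fintype.card_fin] at h
    have hrD : Module.finrank ℝ (LinearMap.range D.mulVecLin) = q := hD
    have hkD : Module.finrank ℝ (LinearMap.ker D.mulVecLin) = p := by omega
    have hrB : Module.finrank ℝ (LinearMap.range (Bᵀ).mulVecLin) = p := hBT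
    exact (Submodule.eq_of_le_of_finrank_le hle (by rw [hkD, hrB])).symm
  -- the equivalence between ker T and ker DK
  have hmain : ∀ y ∈ LinearMap.ker T, Φ y ∈ LinearMap.ker DK := by
    intro y hy
    have hsupp : ∀ j : Fin m, j ∉ K → (Bᵀ *ᵥ y) j = 0 := by
      intro j hj
      have := congrFun (LinearMap.mem_ker.mp hy) ⟨j, Finset.mem_compl.mpr hj⟩
      rw [hTval] at this
      simpa using this
    have hDw : D *ᵥ (Bᵀ *ᵥ y) = 0 := by
      rw [Matrix.mulVec_mulVec, hDB, Matrix.zero_mulVec]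
    rw [LinearMap.mem_ker]
    funext i
    rw [hDKval]
    have h1 : ∑ j : {j : Fin m // j ∈ K}, D i (j : Fin m) * (Bᵀ *ᵥ y) (j : Fin m)
        = ∑ j : Fin m, D i j * (Bᵀ *ᵥ y) j := by
      rw [← Finset.sum_subtype K (fun _ => Iff.rfl) (fun j => D i j * (Bᵀ *ᵥ y) j)]
      refine Finset.sum_subset (Finset.subset_univ K) ?_
      intro j _ hj
      rw [hsupp j hj, mul_zero]
    have h2 : ∑ j : Fin m, D i j * (Bᵀ *ᵥ y) j = 0 := by
      have := congrFun hDw i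
      simpa [Matrix.mulVec, dotProduct] using this
    simp only [hΦval]
    rw [h1, h2]
    rfl
  let e : LinearMap.ker T →ₗ[ℝ] LinearMap.ker DK :=
    LinearMap.codRestrict _ (Φ.comp (LinearMap.ker T).subtype)
      (fun y => hmain y.1 y.2)
  have hebij : Function.Bijective e := by
    constructor
    · rintro ⟨y, hy⟩ ⟨y', hy'⟩ h
      have h' : Φ y = Φ y' := congrArg Subtype.val h
      refine Subtype.ext (hBTinj ?_)
      funext j
      by_cases hj : j ∈ K
      · have := congrFun h' ⟨j, hj⟩
        rw [hΦval, hΦval] at this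
        exact this
      · have h1 := congrFun (LinearMap.mem_ker.mp hy) ⟨j, Finset.mem_compl.mpr hj⟩
        have h2 := congrFun (LinearMap.mem_ker.mp hy') ⟨j, Finset.mem_compl.mpr hj⟩
        rw [hTval] at h1 h2
        simp only [Matrix.mulVecLin_apply]
        rw [h1, h2]
    · rintro ⟨x, hx⟩
      set xt : Fin m → ℝ := fun j => if h : j ∈ K then x ⟨j, h⟩ else 0 with hxt
      have hxker : xt ∈ LinearMap.ker D.mulVecLin := by
        rw [LinearMap.mem_ker]
        funext i
        have h1 : ∑ j : Fin m, D i j * xt j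
            = ∑ j : {j : Fin m // j ∈ K}, D i (j : Fin m) * x j := by
          rw [show (∑ j : {j : Fin m // j ∈ K}, D i (j : Fin m) * x j)
              = ∑ j : {j : Fin m // j ∈ K}, D i (j : Fin m) * xt (j : Fin m) from
            Finset.sum_congr rfl (fun j _ => by simp [hxt, j.2]),
            ← Finset.sum_subtype K (fun _ => Iff.rfl) (fun j => D i j * xt j)]
          exact (Finset.sum_subset (Finset.subset_univ K)
            (fun j _ hj => by simp [hxt, hj])).symm
        have h2 := congrFun (LinearMap.mem_ker.mp hx) i
        rw [hDKval] at h2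
        simp only [Matrix.mulVecLin_apply, Matrix.mulVec, dotProduct]
        rw [h1, h2]
      rw [hkerrange] at hxker
      obtain ⟨y, hy⟩ := hxker
      have hyT : y ∈ LinearMap.ker T := by
        rw [LinearMap.mem_ker]
        funext j
        rw [hTval]
        simp only [Matrix.mulVecLin_apply] at hy
        rw [hy]
        have : (j : Fin m) ∉ K := Finset.mem_compl.mp j.2
        simp [hxt, this]
      refine ⟨⟨y, hyT⟩, ?_⟩
      apply Subtype.ext
      funext j
      have : e ⟨y, hyT⟩ = ⟨Φ y, hmain y hyT⟩ := rfl
      rw [this]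
      show Φ y j = x j
      rw [hΦval]
      simp only [Matrix.mulVecLin_apply] at hy
      rw [hy]
      simp [hxt, j.2]
  have hfr : Module.finrank ℝ (LinearMap.ker DK) = Module.finrank ℝ (LinearMap.ker T) :=
    (LinearEquiv.finrank_eq (LinearEquiv.ofBijective e hebij)).symm
  -- rank-nullity for T
  have hrnT := LinearMap.finrank_range_add_finrank_ker T
  rw [Module.finrank_pi ℝ, Fintype.card_fin] at hrnT
  have hrT : Module.finrank ℝ (LinearMap.range T)
      = (B.submatrix id (fun j : {j : Fin m // j ∈ Kᶜ} => (j : Fin m))).rank := by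
    have : (B.submatrix id (fun j : {j : Fin m // j ∈ Kᶜ} => (j : Fin m)))ᵀ
        = (Bᵀ).submatrix (fun j : {j : Fin m // j ∈ Kᶜ} => (j : Fin m)) id := by
      simp [Matrix.transpose_submatrix]
    rw [← Matrix.rank_transpose, this]
    rfl
  rw [hfr]
  omega
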